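/- Lemma (depth witnesses, Algorithm 1): In any reachable configuration of Algorithm 1 starting from the initial configuration (all agents have depth ⊥), for every agent v₁ with depth_{v₁} ∉ {⊥, 1}, at some point there was an interaction with an agent v₂ adjacent to v₁ in the communication graph such that depth_{v₁} = depth_{v₂} + 1, and depth_{v₂} never changes afterwards; and every agent v with depth_v = 1 is adjacent to the base station. -/
import Mathlib


/-- Agent colors of Algorithm 1. -/
inductive Col : Type
  | ini | r | b
deriving DecidableEq

/-- Base-station variable `RB`. -/
inductive RB : Type
  | r | b
deriving DecidableEq

/-- Flip the base-station variable. -/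
def RB.flip : RB → RB
  | .r => .b
  | .b => .r

/-- The color assigned by the base station. -/
def RB.toCol : RB → Col
  | .r => .r
  | .b => .b

/-- An agent state: a color and a depth (`none` is ⊥). -/
abbrev AgSt := Col × Option ℕ

/-- Effect of an interaction between the base station and one agent. -/
def bsStep (rb : RB) (a : AgSt) : RB × AgSt :=
  match a with
  | (.ini, some 1) => (rb.flip, (rb.toCol, some 1))
  | (c, none)      => (rb, (c, some 1))
  | a              => (rb, a)

/-- Effect of an interaction between two agents x and y:
first the depth propagation, then the color swap towards a smaller depth. -/
def agStep (x y : AgSt) : AgSt × AgSt :=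
  let d : Option ℕ × Option ℕ :=
    match x.2, y.2 with
    | none, some e => (some (e + 1), some e)
    | some e, none => (some e, some (e + 1))
    | dx, dy       => (dx, dy)
  match d with
  | (some dx, some dy) =>
      if dx < dy ∧ y.1 = Col.ini then ((Col.ini, some dx), (x.1, some dy))
      else if dy < dx ∧ x.1 = Col.ini then ((y.1, some dx), (Col.ini, some dy))
      else ((x.1, some dx), (y.1, some dy))
  | (dx, dy) => ((x.1, dx), (y.1, dy))

/-- A configuration: the base-station variable together with the agents' states. -/
abbrev Conf (n : ℕ) := RB × (Fin n → AgSt)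

/-- One step of Algorithm 1 on a communication graph: either the base station
interacts with an adjacent agent, or two adjacent distinct agents interact. -/
def Step {n : ℕ} (Adj : Fin n → Fin n → Prop) (BAdj : Fin n → Prop)
    (c c' : Conf n) : Prop :=
  (∃ i : Fin n, BAdj i ∧ c'.1 = (bsStep c.1 (c.2 i)).1 ∧
      c'.2 = Function.update c.2 i (bsStep c.1 (c.2 i)).2) ∨
  (c'.1 = c.1 ∧ ∃ i j : Fin n, i ≠ j ∧ Adj i j ∧
      c'.2 = Function.update (Function.update c.2 i (agStep (c.2 i) (c.2 j)).1) j
        (agStep (c.2 i) (c.2 j)).2)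

/-- Number of agents whose color is `x`. -/
def cnt {n : ℕ} (C : Fin n → AgSt) (x : Col) : ℕ :=
  (Finset.univ.filter fun a => (C a).1 = x).card

lemma bsStep_char (rb : RB) (a : AgSt) :
    ((bsStep rb a).2).2 = a.2 ∨ (a.2 = none ∧ ((bsStep rb a).2).2 = some 1) := by
  obtain ⟨c, dep⟩ := a
  cases c <;> rcases dep with _ | d <;> (try rcases d with _ | _ | d) <;> simp [bsStep]

lemma agStep_fst_char (x y : AgSt) :
    ((agStep x y).1).2 = x.2 ∨
      (x.2 = none ∧ ∃ e, y.2 = some e ∧ ((agStep x y).1).2 = some (e + 1)) := by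
  obtain ⟨cx, dx⟩ := x; obtain ⟨cy, dy⟩ := y
  rcases dx with _ | d <;> rcases dy with _ | e <;>
    simp [agStep] <;> split_ifs <;> simp

lemma agStep_snd_char (x y : AgSt) :
    ((agStep x y).2).2 = y.2 ∨
      (y.2 = none ∧ ∃ e, x.2 = some e ∧ ((agStep x y).2).2 = some (e + 1)) := by
  obtain ⟨cx, dx⟩ := x; obtain ⟨cy, dy⟩ := y
  rcases dx with _ | d <;> rcases dy with _ | e <;>
    simp [agStep] <;> split_ifs <;> simp

/-- Depth characterization of a single step: depths either stay the same,
or go from `none` to `some 1` via the base station, or from `none` to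
`some (e+1)` via a neighbor of depth `e`. -/
lemma step_char {n : ℕ} {Adj : Fin n → Fin n → Prop} {BAdj : Fin n → Prop}
    (hAdjSymm : ∀ i j, Adj i j → Adj j i)
    {c c' : Conf n} (h : Step Adj BAdj c c') (v : Fin n) :
    (c'.2 v).2 = (c.2 v).2 ∨
    ((c.2 v).2 = none ∧ BAdj v ∧ (c'.2 v).2 = some 1) ∨
    ((c.2 v).2 = none ∧ ∃ w e, Adj v w ∧ (c.2 w).2 = some e ∧
      (c'.2 v).2 = some (e + 1)) := by
  rcases h with ⟨i, hB, _, hupd⟩ | ⟨_, i, j, hij, hadj, hupd⟩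
  · rw [hupd]
    rcases eq_or_ne v i with rfl | hv
    · rw [Function.update_self]
      rcases bsStep_char c.1 (c.2 v) with h | ⟨h0, h1⟩
      · exact Or.inl h
      · exact Or.inr (Or.inl ⟨h0, hB, h1⟩)
    · rw [Function.update_of_ne hv]; exact Or.inl rfl
  · rw [hupd]
    rcases eq_or_ne v j with rfl | hvj
    · rw [Function.update_self]
      rcases agStep_snd_char (c.2 i) (c.2 v) with h | ⟨h0, e, he, h1⟩
      · exact Or.inl h
      · exact Or.inr (Or.inr ⟨h0, i, e, hAdjSymm _ _ hadj, he, h1⟩)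
    · rw [Function.update_of_ne hvj]
      rcases eq_or_ne v i with rfl | hvi
      · rw [Function.update_self]
        rcases agStep_fst_char (c.2 v) (c.2 j) with h | ⟨h0, e, he, h1⟩
        · exact Or.inl h
        · exact Or.inr (Or.inr ⟨h0, j, e, hadj, he, h1⟩)
      · rw [Function.update_of_ne hvi]; exact Or.inl rfl

/-- Depths never change once set (single step). -/
lemma step_depth {n : ℕ} {Adj : Fin n → Fin n → Prop} {BAdj : Fin n → Prop}
    (hAdjSymm : ∀ i j, Adj i j → Adj j i)
    {c c' : Conf n} (h : Step Adj BAdj c c') (v : Fin n) (d : ℕ)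
    (hd : (c.2 v).2 = some d) : (c'.2 v).2 = some d := by
  rcases step_char hAdjSymm h v with h | ⟨h0, _⟩ | ⟨h0, _⟩ <;>
    first
      | (rw [h, hd])
      | (rw [hd] at h0; exact absurd h0 (by simp))

/-- Depths never change once set (reachability). -/
lemma reach_depth {n : ℕ} {Adj : Fin n → Fin n → Prop} {BAdj : Fin n → Prop}
    (hAdjSymm : ∀ i j, Adj i j → Adj j i)
    {c c' : Conf n} (h : Relation.ReflTransGen (Step Adj BAdj) c c') (v : Fin n)
    (d : ℕ) (hd : (c.2 v).2 = some d) : (c'.2 v).2 = some d := by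
  induction h with
  | refl => exact hd
  | tail _ hstep ih => exact step_depth hAdjSymm hstep v d ih

/-- The key invariant. -/
def Inv1 {n : ℕ} (Adj : Fin n → Fin n → Prop) (BAdj : Fin n → Prop)
    (C : Conf n) : Prop :=
  ∀ v : Fin n,
    (C.2 v).2 ≠ some 0 ∧
    ((C.2 v).2 = some 1 → BAdj v) ∧
    ∀ d : ℕ, (C.2 v).2 = some (d + 2) →
      ∃ w : Fin n, Adj v w ∧ (C.2 w).2 = some (d + 1)

lemma Inv1_step {n : ℕ} {Adj : Fin n → Fin n → Prop} {BAdj : Fin n → Prop}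
    (hAdjSymm : ∀ i j, Adj i j → Adj j i)
    {c c' : Conf n} (h : Step Adj BAdj c c') (hI : Inv1 Adj BAdj c) :
    Inv1 Adj BAdj c' := by
  intro v
  rcases step_char hAdjSymm h v with heq | ⟨h0, hB, h1⟩ | ⟨h0, w, e, hadj, hwe, h1⟩
  · obtain ⟨i0, i1, i2⟩ := hI v
    refine ⟨by rw [heq]; exact i0, fun hv => i1 (heq ▸ hv), fun d hd => ?_⟩
    obtain ⟨w, hw, hwd⟩ := i2 d (heq ▸ hd)
    exact ⟨w, hw, step_depth hAdjSymm h w (d + 1) hwd⟩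
  · refine ⟨by rw [h1]; simp, fun _ => hB, fun d hd => ?_⟩
    rw [h1] at hd; simp at hd
  · have he0 : e ≠ 0 := fun he => (hI w).1 (he ▸ hwe)
    refine ⟨by rw [h1]; simp, fun hv => ?_, fun d hd => ?_⟩
    · rw [h1] at hv
      have h11 : e + 1 = 1 := by injection hv
      omega
    · rw [h1] at hd
      have hd' : e + 1 = d + 2 := by injection hd
      have : e = d + 1 := by omega
      exact ⟨w, hadj, step_depth hAdjSymm h w (d + 1) (this ▸ hwe)⟩

lemma Inv1_reach {n : ℕ} {Adj : Fin n → Fin n → Prop} {BAdj : Fin n → Prop}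
    (hAdjSymm : ∀ i j, Adj i j → Adj j i) {rb0 : RB} {C : Conf n}
    (h : Relation.ReflTransGen (Step Adj BAdj)
      (rb0, fun _ => (Col.ini, none)) C) : Inv1 Adj BAdj C := by
  induction h with
  | refl => intro v; exact ⟨by simp, by simp, by simp⟩
  | tail _ hstep ih => exact Inv1_step hAdjSymm hstep ih

theorem stmt12 (n : ℕ) (Adj : Fin n → Fin n → Prop)
    (hAdjSymm : ∀ i j, Adj i j → Adj j i) (BAdj : Fin n → Prop)
    (rb0 : RB) (C : Conf n)
    (hreach : Relation.ReflTransGen (Step Adj BAdj)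
      (rb0, fun _ => (Col.ini, none)) C) :
    ∀ v₁ : Fin n,
      (∀ d : ℕ, (C.2 v₁).2 = some (d + 2) →
        ∃ v₂ : Fin n, Adj v₁ v₂ ∧ (C.2 v₂).2 = some (d + 1) ∧
          ∀ C', Relation.ReflTransGen (Step Adj BAdj) C C' →
            (C'.2 v₂).2 = some (d + 1)) ∧
      ((C.2 v₁).2 = some 1 → BAdj v₁) := by
  have hI := Inv1_reach hAdjSymm hreach
  intro v₁
  refine ⟨fun d hd => ?_, (hI v₁).2.1⟩
  obtain ⟨w, hw, hwd⟩ := (hI v₁).2.2 d hd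
  exact ⟨w, hw, hwd, fun C' hC' => reach_depth hAdjSymm hC' w (d + 1) hwd⟩
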